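/- Let (W,S) be a Coxeter system and let K be a subset of W having a unique maximal element v in the Bruhat order. Then, for any two elements σ₁ and σ₂ of W, the set I(σ₁) K I(σ₂) = { a k b : a ≤ σ₁, k ∈ K, b ≤ σ₂ } has a unique maximal element in the Bruhat order, namely the unique maximal element of I(σ₁) v I(σ₂). In particular, for any two finite standard parabolic subgroups W₁ and W₂ of W, the set W₁ K W₂ has a unique maximal element, namely the unique maximal element of W₁ v W₂. -/

import Mathlib

variable {B W : Type*} [Group W] {M : CoxeterMatrix B}

/-- The (strong) Bruhat order on the Coxeter group `W`: `u ≤ v` if and only if some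
reduced word for `v` admits a sublist whose product is `u`. -/
def BruhatLE (cs : CoxeterSystem M W) (u v : W) : Prop :=
  ∃ ω : List B, cs.IsReduced ω ∧ cs.wordProd ω = v ∧
    ∃ ω' : List B, ω'.Sublist ω ∧ cs.wordProd ω' = u

/-- The strict Bruhat order. -/
def BruhatLT (cs : CoxeterSystem M W) (u v : W) : Prop :=
  BruhatLE cs u v ∧ u ≠ v

/-- `m` is the unique minimal element of `K` in the Bruhat order, i.e. `m ∈ K` and
`m` is Bruhat-below every element of `K`. -/
def IsBrMin (cs : CoxeterSystem M W) (K : Set W) (m : W) : Prop :=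
  m ∈ K ∧ ∀ x ∈ K, BruhatLE cs m x

/-- `m` is the unique maximal element of `K` in the Bruhat order, i.e. `m ∈ K` and
`m` is Bruhat-above every element of `K`. -/
def IsBrMax (cs : CoxeterSystem M W) (K : Set W) (m : W) : Prop :=
  m ∈ K ∧ ∀ x ∈ K, BruhatLE cs x m

/-- A standard parabolic subgroup: a subgroup generated by a subset of the simple
reflections. -/
def IsStdParabolic (cs : CoxeterSystem M W) (P : Subgroup W) : Prop :=
  ∃ X : Set B, P = Subgroup.closure (cs.simple '' X)

/-- The left coset `u•W₁ = {u * b : b ∈ W₁}`. -/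
def lCoset (W₁ : Subgroup W) (u : W) : Set W := {x | ∃ b ∈ W₁, x = u * b}

/-- The double coset `W₁ u W₂ = {a * u * b : a ∈ W₁, b ∈ W₂}`. -/
def dblCoset (W₁ W₂ : Subgroup W) (u : W) : Set W :=
  {x | ∃ a ∈ W₁, ∃ b ∈ W₂, x = a * u * b}


namespace BruhatAux

open List CoxeterSystem

variable (cs : CoxeterSystem M W)

noncomputable local instance : DecidableEq W := Classical.decEq W

/-! ### The parity (sign) representation and strong exchange -/

noncomputable def pf (i : B) : W × ℤˣ → W × ℤˣ :=
  fun p => (cs.simple i * p.1 * cs.simple i, if p.1 = cs.simple i then -p.2 else p.2)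

lemma pf_involutive (i : B) : Function.Involutive (pf cs i) := by
  intro p
  simp only [pf]
  have hc : cs.simple i * p.1 * cs.simple i = cs.simple i ↔ p.1 = cs.simple i := by
    constructor
    · intro h
      have := congrArg (fun y => cs.simple i * y * cs.simple i) h
      simpa [mul_assoc, cs.simple_mul_simple_cancel_left, cs.simple_mul_simple_self] using this
    · intro h
      rw [h]
      simp [mul_assoc, cs.simple_mul_simple_self]
  ext
  · show cs.simple i * (cs.simple i * p.1 * cs.simple i) * cs.simple i = p.1
    rw [← mul_assoc, ← mul_assoc, cs.simple_mul_simple_self]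
    simp [mul_assoc, cs.simple_mul_simple_self]
  · simp only [hc]
    by_cases h : p.1 = cs.simple i <;> simp [h]

noncomputable def pp (i : B) : Equiv.Perm (W × ℤˣ) := (pf_involutive cs i).toPerm

lemma pp_apply (i : B) (x : W × ℤˣ) : pp cs i x = pf cs i x := rfl

lemma ris_cons (i : B) (ω : List B) :
    cs.rightInvSeq (i :: ω) =
      ((cs.wordProd ω)⁻¹ * cs.simple i * cs.wordProd ω) :: cs.rightInvSeq ω := rfl

lemma prod_pp_apply (ω : List B) (t : W) (ε : ℤˣ) :
    (ω.map (pp cs)).prod (t, ε) =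
      (cs.wordProd ω * t * (cs.wordProd ω)⁻¹, ε * (-1) ^ ((cs.rightInvSeq ω).count t)) := by
  induction ω with
  | nil => simp
  | cons i ω ih =>
    rw [map_cons, prod_cons, Equiv.Perm.mul_apply, ih]
    show pf cs i _ = _
    simp only [pf]
    have hc : cs.wordProd ω * t * (cs.wordProd ω)⁻¹ = cs.simple i ↔
        (cs.wordProd ω)⁻¹ * cs.simple i * cs.wordProd ω = t := by
      constructor
      · intro h; rw [← h]; group
      · intro h; rw [← h]; group
    ext
    · simp only [cs.wordProd_cons, mul_inv_rev, cs.inv_simple]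
      group
    · simp only [ris_cons, count_cons]
      by_cases h : (cs.wordProd ω)⁻¹ * cs.simple i * cs.wordProd ω = t
      · rw [if_pos (hc.mpr h), if_pos (by exact beq_iff_eq.mpr h)]
        rw [pow_succ]
        simp [mul_comm]
      · rw [if_neg (fun hh => h (hc.mp hh)), if_neg (by simpa using h)]
        simp


/-! ### Braid relations for the sign representation -/

noncomputable def qq (i j : B) (n : ℕ) : W := cs.wordProd (alternatingWord i j n)

noncomputable def dd (i j : B) (n : ℕ) : W := (qq cs i j n)⁻¹ * qq cs i j (n + 1)

lemma simple_conj_zpow (i j : B) (k : ℤ) :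
    cs.simple j * (cs.simple i * cs.simple j) ^ k =
      ((cs.simple i * cs.simple j) ^ k)⁻¹ * cs.simple j := by
  have h1 : cs.simple j * (cs.simple i * cs.simple j) * (cs.simple j)⁻¹
      = (cs.simple i * cs.simple j)⁻¹ := by
    rw [cs.inv_simple, mul_inv_rev, cs.inv_simple, cs.inv_simple]
    rw [mul_assoc, mul_assoc, cs.simple_mul_simple_self, mul_one]
  have h2 : cs.simple j * (cs.simple i * cs.simple j) ^ k * (cs.simple j)⁻¹
      = ((cs.simple i * cs.simple j) ^ k)⁻¹ := by
    rw [← conj_zpow, h1, inv_zpow]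
  calc cs.simple j * (cs.simple i * cs.simple j) ^ k
      = (cs.simple j * (cs.simple i * cs.simple j) ^ k * (cs.simple j)⁻¹) * cs.simple j := by
        group
    _ = ((cs.simple i * cs.simple j) ^ k)⁻¹ * cs.simple j := by rw [h2]

lemma dd_eq (i j : B) (n : ℕ) :
    dd cs i j n = ((cs.simple i * cs.simple j) ^ (n : ℤ))⁻¹ * cs.simple j := by
  set p := cs.simple i * cs.simple j with hp
  have hs : ∀ k : ℤ, cs.simple j * p ^ k = (p ^ k)⁻¹ * cs.simple j := fun k => by
    rw [hp]; exact simple_conj_zpow cs i j k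
  have hq : ∀ m : ℕ, qq cs i j m =
      (if Even m then 1 else cs.simple j) * p ^ (m / 2) :=
    fun m => cs.prod_alternatingWord_eq_mul_pow i j m
  have key : ∀ a b c : ℤ, a + b = c →
      (p ^ a)⁻¹ * ((p ^ b)⁻¹ * cs.simple j) = (p ^ c)⁻¹ * cs.simple j := by
    intro a b c h
    rw [← mul_assoc, ← mul_inv_rev, ← zpow_add, Int.add_comm b a, h]
  rcases Nat.even_or_odd n with he | ho
  · obtain ⟨r, rfl⟩ := he
    have h1 : Even (r + r) := ⟨r, rfl⟩
    have h2 : ¬ Even (r + r + 1) := by simp [Nat.even_add_one, h1]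
    have e1 : (r + r) / 2 = r := by omega
    have e2 : (r + r + 1) / 2 = r := by omega
    rw [dd, hq, hq, if_pos h1, if_neg h2, e1, e2, one_mul]
    rw [← zpow_natCast p r, hs]
    exact key r r (r + r) (by push_cast; ring)
  · obtain ⟨r, rfl⟩ := ho
    have h1 : ¬ Even (2 * r + 1) := by simp [Nat.even_add_one]
    have h2 : Even (2 * r + 1 + 1) := ⟨r + 1, by ring⟩
    have e1 : (2 * r + 1) / 2 = r := by omega
    have e2 : (2 * r + 1 + 1) / 2 = r + 1 := by omega
    rw [dd, hq, hq, if_pos h2, if_neg h1, e1, e2, one_mul, mul_inv_rev, cs.inv_simple]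
    rw [← zpow_natCast p r, ← zpow_natCast p (r + 1), mul_assoc, hs]
    exact key r (r + 1) (2 * r + 1) (by push_cast; ring)


lemma ris_alternatingWord (i j : B) (n : ℕ) :
    cs.rightInvSeq (alternatingWord i j n) = ((List.range n).map (dd cs i j)).reverse := by
  induction n with
  | zero => simp [alternatingWord]
  | succ n ih =>
    rw [alternatingWord_succ', ris_cons, ih, range_succ, map_append, reverse_append]
    simp only [map_cons, map_nil, reverse_cons, reverse_nil, nil_append, singleton_append]
    congr 1
    show _ = dd cs i j n
    rw [dd, qq, qq, alternatingWord_succ', cs.wordProd_cons]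
    group

lemma count_ris_alt_even (i j : B) (t : W) :
    Even ((cs.rightInvSeq (alternatingWord i j (2 * M i j))).count t) := by
  rw [ris_alternatingWord, count_reverse]
  have h2 : 2 * M.M i j = M.M i j + M.M i j := by ring
  rw [h2, range_add, map_append, count_append]
  have hmap : ((List.range (M.M i j)).map (fun x => M.M i j + x)).map (dd cs i j)
      = (List.range (M.M i j)).map (dd cs i j) := by
    rw [map_map]
    apply map_congr_left
    intro a _
    show dd cs i j (M.M i j + a) = dd cs i j a
    rw [dd_eq, dd_eq]
    congr 2
    have hm : (cs.simple i * cs.simple j) ^ (M.M i j : ℤ) = 1 := by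
      rw [zpow_natCast]; exact cs.simple_mul_simple_pow i j
    push_cast
    rw [zpow_add, hm, one_mul]
  rw [map_map] at hmap
  rw [map_map, hmap]
  exact ⟨_, rfl⟩

lemma alternatingWord_two_mul_succ (i j : B) (k : ℕ) :
    alternatingWord i j (2 * (k + 1)) = i :: j :: alternatingWord i j (2 * k) := by
  have h : 2 * (k + 1) = (2 * k + 1) + 1 := by ring
  rw [h, alternatingWord_succ', alternatingWord_succ']
  have h1 : ¬ Even (2 * k + 1) := by simp [Nat.even_add_one]
  have h2 : Even (2 * k) := ⟨k, by ring⟩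
  rw [if_neg h1, if_pos h2]

lemma pp_liftable : M.IsLiftable (pp cs) := by
  intro i j
  have hw : ∀ k : ℕ, (pp cs i * pp cs j) ^ k
      = ((alternatingWord i j (2 * k)).map (pp cs)).prod := by
    intro k
    induction k with
    | zero => simp [alternatingWord]
    | succ k ih =>
      rw [alternatingWord_two_mul_succ, map_cons, map_cons, prod_cons, prod_cons, ← ih,
        pow_succ']
      rw [mul_assoc]
  apply Equiv.ext
  rintro ⟨t, ε⟩
  rw [hw (M.M i j), prod_pp_apply]
  have hπ : cs.wordProd (alternatingWord i j (2 * M.M i j)) = 1 := by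
    rw [cs.prod_alternatingWord_eq_mul_pow]
    have : Even (2 * M.M i j) := ⟨M.M i j, by ring⟩
    rw [if_pos this]
    have : 2 * M.M i j / 2 = M.M i j := by omega
    rw [this, one_mul]
    exact cs.simple_mul_simple_pow i j
  rw [hπ]
  have := (count_ris_alt_even cs i j t).neg_one_pow (α := ℤˣ)
  rw [this]
  simp

noncomputable def rho : W →* Equiv.Perm (W × ℤˣ) := cs.lift ⟨pp cs, pp_liftable cs⟩

lemma rho_wordProd (ω : List B) : rho cs (cs.wordProd ω) = (ω.map (pp cs)).prod := by
  induction ω with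
  | nil => simp [rho]
  | cons i ω ih =>
    rw [cs.wordProd_cons, map_cons, prod_cons, map_mul, ih, rho, cs.lift_apply_simple]

lemma count_parity (ω ω' : List B) (h : cs.wordProd ω = cs.wordProd ω') (t : W) :
    ((-1 : ℤˣ)) ^ ((cs.rightInvSeq ω).count t)
      = (-1 : ℤˣ) ^ ((cs.rightInvSeq ω').count t) := by
  have h2 : (ω.map (pp cs)).prod (t, 1) = (ω'.map (pp cs)).prod (t, 1) := by
    rw [← rho_wordProd, ← rho_wordProd, h]
  rw [prod_pp_apply, prod_pp_apply, h] at h2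
  have := congrArg Prod.snd h2
  simpa using this


lemma ris_append (A A' : List B) :
    cs.rightInvSeq (A ++ A') =
      (cs.rightInvSeq A).map (fun x => (cs.wordProd A')⁻¹ * x * cs.wordProd A')
        ++ cs.rightInvSeq A' := by
  induction A with
  | nil => simp
  | cons a A ih =>
    rw [cons_append, ris_cons, ris_cons, ih, map_cons, cons_append]
    congr 1
    rw [cs.wordProd_append, mul_inv_rev]
    group

lemma count_map_eq (l : List W) (g : W → W) (t t' : W) (hg : ∀ x, g x = t ↔ x = t') :
    (l.map g).count t = l.count t' := by
  induction l with
  | nil => simp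
  | cons a l ih =>
    rw [map_cons, count_cons, count_cons, ih]
    congr 1
    by_cases h : a = t'
    · rw [if_pos (by exact beq_iff_eq.mpr ((hg a).mpr h)), if_pos (by exact beq_iff_eq.mpr h)]
    · rw [if_neg (by simpa using fun hh => h ((hg a).mp hh)), if_neg (by simpa using h)]

lemma conj_eq_iff (g x y : W) : g⁻¹ * x * g = y ↔ x = g * y * g⁻¹ := by
  constructor
  · rintro rfl; group
  · rintro rfl; group

lemma conj_eq_iff' (g x y : W) : g * x * g⁻¹ = y ↔ x = g⁻¹ * y * g := by
  constructor
  · rintro rfl; group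
  · rintro rfl; group

lemma lis_eq_map (μ : List B) :
    cs.leftInvSeq μ =
      (cs.rightInvSeq μ).map (fun x => cs.wordProd μ * x * (cs.wordProd μ)⁻¹) := by
  induction μ with
  | nil => simp
  | cons a μ ih =>
    rw [ris_cons, map_cons]
    show cs.simple a :: map (⇑(MulAut.conj (cs.simple a))) (cs.leftInvSeq μ) = _
    congr 1
    · rw [cs.wordProd_cons, mul_inv_rev, cs.inv_simple]
      have hid : ∀ u v : W, v * u * (u⁻¹ * v * u) * (u⁻¹ * v) = v * (v * v) := by
        intro u v; group
      rw [hid, cs.simple_mul_simple_self, mul_one]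
    · rw [ih, map_map]
      apply map_congr_left
      intro x _
      show cs.simple a * (cs.wordProd μ * x * (cs.wordProd μ)⁻¹) * (cs.simple a)⁻¹ = _
      rw [cs.wordProd_cons, mul_inv_rev, cs.inv_simple]
      group

lemma count_refl_odd {t : W} (ht : cs.IsReflection t) :
    ∃ ψ : List B, cs.wordProd ψ = t ∧ Odd ((cs.rightInvSeq ψ).count t) := by
  obtain ⟨w, i0, rfl⟩ := ht
  obtain ⟨μ, hμ⟩ := cs.wordProd_surjective w
  refine ⟨μ ++ ([i0] ++ μ.reverse), ?_, ?_⟩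
  · rw [cs.wordProd_append, cs.wordProd_append, cs.wordProd_reverse, hμ,
      cs.wordProd_singleton, ← mul_assoc]
  · rw [ris_append, ris_append cs [i0] μ.reverse, count_append, count_append]
    have hrev : cs.wordProd μ.reverse = w⁻¹ := by rw [cs.wordProd_reverse, hμ]
    have hπ : cs.wordProd ([i0] ++ μ.reverse) = cs.simple i0 * w⁻¹ := by
      rw [cs.wordProd_append, cs.wordProd_singleton, hrev]
    -- first block
    have c1 : ((cs.rightInvSeq μ).map
        (fun x => (cs.wordProd ([i0] ++ μ.reverse))⁻¹ * x * cs.wordProd ([i0] ++ μ.reverse))).count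
          (w * cs.simple i0 * w⁻¹)
        = (cs.rightInvSeq μ).count (cs.simple i0) := by
      apply count_map_eq
      intro x
      rw [hπ, conj_eq_iff]
      have hid : ∀ u v : W, v * u⁻¹ * (u * v * u⁻¹) * (v * u⁻¹)⁻¹ = v := by
        intro u v; group
      rw [hid w (cs.simple i0)]
    -- middle block
    have c2 : ((cs.rightInvSeq [i0]).map
        (fun x => (cs.wordProd μ.reverse)⁻¹ * x * cs.wordProd μ.reverse)).count
          (w * cs.simple i0 * w⁻¹) = 1 := by
      have : cs.rightInvSeq [i0] = [cs.simple i0] := by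
        rw [show [i0] = [] ++ [i0] from rfl]
        exact cs.rightInvSeq_singleton i0
      rw [this, hrev, map_cons, map_nil]
      simp only [inv_inv, count_cons, count_nil]
      rw [if_pos (by exact beq_iff_eq.mpr rfl)]
    -- last block
    have c3 : (cs.rightInvSeq μ.reverse).count (w * cs.simple i0 * w⁻¹)
        = (cs.rightInvSeq μ).count (cs.simple i0) := by
      rw [cs.rightInvSeq_reverse, count_reverse, lis_eq_map, hμ]
      apply count_map_eq
      intro x
      rw [conj_eq_iff']
      have hval : w⁻¹ * (w * cs.simple i0 * w⁻¹) * w = cs.simple i0 := by group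
      rw [hval]
    rw [c1, c2, c3]
    exact ⟨(cs.rightInvSeq μ).count (cs.simple i0), by ring⟩

theorem strong_exchange_mem (ω : List B) {t : W} (ht : cs.IsReflection t)
    (hl : cs.length (cs.wordProd ω * t) < cs.length (cs.wordProd ω)) :
    t ∈ cs.rightInvSeq ω := by
  obtain ⟨ψ, hψ, hodd⟩ := count_refl_odd cs ht
  obtain ⟨ω', hred', hw'⟩ := cs.exists_reduced_word' (cs.wordProd ω * t)
  have hnot : t ∉ cs.rightInvSeq ω' := by
    intro hmem
    have h2 := (cs.isRightInversion_of_mem_rightInvSeq hred' hmem).2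
    rw [← hw'] at h2
    rw [mul_assoc, ht.mul_self, mul_one] at h2
    omega
  have hcount' : (cs.rightInvSeq ω').count t = 0 := by
    rw [count_eq_zero]; exact hnot
  have hπ : cs.wordProd ω = cs.wordProd (ω' ++ ψ) := by
    rw [cs.wordProd_append, hψ, ← hw', mul_assoc, ht.mul_self, mul_one]
  have hpar := count_parity cs ω (ω' ++ ψ) hπ t
  rw [ris_append, count_append] at hpar
  have cmap : ((cs.rightInvSeq ω').map
      (fun x => (cs.wordProd ψ)⁻¹ * x * cs.wordProd ψ)).count t
      = (cs.rightInvSeq ω').count t := by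
    apply count_map_eq
    intro x
    rw [hψ, conj_eq_iff]
    have hval : t * t * t⁻¹ = t := by rw [ht.mul_self, one_mul, ht.inv]
    rw [hval]
  rw [cmap, hcount', zero_add] at hpar
  rw [hodd.neg_one_pow] at hpar
  by_contra hmem
  have : (cs.rightInvSeq ω).count t = 0 := by rw [count_eq_zero]; exact hmem
  rw [this, pow_zero] at hpar
  exact (by decide : ¬ ((1 : ℤˣ) = -1)) hpar

theorem strong_exchange (ω : List B) {t : W} (ht : cs.IsReflection t)
    (hl : cs.length (cs.wordProd ω * t) < cs.length (cs.wordProd ω)) :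
    ∃ j < ω.length, cs.wordProd (ω.eraseIdx j) = cs.wordProd ω * t := by
  have hmem := strong_exchange_mem cs ω ht hl
  obtain ⟨j, hj, hjt⟩ := List.mem_iff_getElem.mp hmem
  rw [cs.length_rightInvSeq] at hj
  refine ⟨j, hj, ?_⟩
  rw [← cs.wordProd_mul_getD_rightInvSeq ω j]
  congr 1
  rw [List.getD_eq_getElem _ 1 (by rw [cs.length_rightInvSeq]; exact hj), hjt]


/-! ### The Bruhat order via chains -/

def bstep (x y : W) : Prop :=
  ∃ t, cs.IsReflection t ∧ x = y * t ∧ cs.length x < cs.length y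

def ble (x y : W) : Prop := Relation.ReflTransGen (bstep cs) x y

lemma ble_refl (x : W) : ble cs x x := Relation.ReflTransGen.refl

lemma ble_trans {x y z : W} (h1 : ble cs x y) (h2 : ble cs y z) : ble cs x z :=
  Relation.ReflTransGen.trans h1 h2

lemma bstep_up (y : W) (i : B) (h : cs.length y < cs.length (y * cs.simple i)) :
    bstep cs y (y * cs.simple i) :=
  ⟨cs.simple i, cs.isReflection_simple i, (cs.simple_mul_simple_cancel_right i).symm, h⟩

lemma bstep_conj {c y : W} (i : B) {t : W} (ht : cs.IsReflection t) (hc : c = y * t)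
    (hlen : cs.length (c * cs.simple i) < cs.length (y * cs.simple i)) :
    bstep cs (c * cs.simple i) (y * cs.simple i) := by
  refine ⟨cs.simple i * t * cs.simple i, ?_, ?_, hlen⟩
  · have := ht.conj (cs.simple i)
    rwa [cs.inv_simple] at this
  · rw [hc]
    simp only [mul_assoc, cs.simple_mul_simple_cancel_left]

lemma length_le_of_ble {x y : W} (h : ble cs x y) : cs.length x ≤ cs.length y := by
  induction h with
  | refl => exact le_refl _
  | tail _ hstep ih =>
    obtain ⟨t, ht, hc, hl⟩ := hstep
    exact le_trans ih (le_of_lt hl)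

theorem liftMN : ∀ n : ℕ, ∀ y : W, cs.length y ≤ n → ∀ (i : B) (x : W), ble cs x y →
    (cs.length (y * cs.simple i) = cs.length y + 1 →
      ble cs x (y * cs.simple i) ∧ ble cs (x * cs.simple i) (y * cs.simple i)) ∧
    (cs.length (y * cs.simple i) + 1 = cs.length y →
      ble cs x (y * cs.simple i) ∨ ble cs (x * cs.simple i) (y * cs.simple i)) := by
  intro n
  induction n using Nat.strong_induction_on with
  | _ n IH =>
  intro y hy i x hble
  rcases Relation.ReflTransGen.cases_tail hble with heq | ⟨c, hxc, hcy⟩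
  · subst heq
    constructor
    · intro hup
      exact ⟨Relation.ReflTransGen.single (bstep_up cs _ i (by omega)), ble_refl cs _⟩
    · intro _
      exact Or.inr (ble_refl cs _)
  · obtain ⟨t, ht, hc, hlc⟩ := hcy
    have hcy' : bstep cs c y := ⟨t, ht, hc, hlc⟩
    constructor
    · -- M part: length (y * s i) = length y + 1
      intro hyup
      have hy_ys : bstep cs y (y * cs.simple i) := bstep_up cs y i (by omega)
      rcases cs.length_mul_simple c i with hcup | hcdown
      · -- c * s i goes up
        have hIH := ((IH (cs.length c) (by omega) c le_rfl i x hxc).1 hcup)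
        have hstep : bstep cs (c * cs.simple i) (y * cs.simple i) :=
          bstep_conj cs i ht hc (by omega)
        exact ⟨hIH.1.tail hstep, hIH.2.tail hstep⟩
      · -- c * s i goes down
        have hIH := ((IH (cs.length c) (by omega) c le_rfl i x hxc).2 hcdown)
        have hstep : bstep cs (c * cs.simple i) (y * cs.simple i) :=
          bstep_conj cs i ht hc (by omega)
        rcases hIH with h1 | h2
        · -- x ⊑ c * s i
          refine ⟨h1.tail hstep, ?_⟩
          -- climb back : M at (c * s i) with letter i
          have hcc : cs.length ((c * cs.simple i) * cs.simple i)
              = cs.length (c * cs.simple i) + 1 := by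
            rw [cs.simple_mul_simple_cancel_right]
            omega
          have hIH2 := ((IH (cs.length (c * cs.simple i)) (by omega)
              (c * cs.simple i) le_rfl i x h1).1 hcc).2
          rw [cs.simple_mul_simple_cancel_right] at hIH2
          -- hIH2 : ble (x * s i) c
          exact (hIH2.tail hcy').tail hy_ys
        · -- x * s i ⊑ c * s i
          exact ⟨(hxc.tail hcy').tail hy_ys, h2.tail hstep⟩
    · -- N part: length (y * s i) + 1 = length y
      intro hydown
      rcases cs.length_mul_simple c i with hcup | hcdown
      · -- c * s i goes up: use exchange dichotomy
        obtain ⟨κ, hκred, hκ⟩ := cs.exists_reduced_word' (y * cs.simple i)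
        have hω : cs.wordProd (κ ++ [i]) = y := by
          rw [cs.wordProd_append, cs.wordProd_singleton, ← hκ,
            cs.simple_mul_simple_cancel_right]
        have hlent : cs.length (cs.wordProd (κ ++ [i]) * t)
            < cs.length (cs.wordProd (κ ++ [i])) := by
          rw [hω, ← hc]; exact hlc
        obtain ⟨jj, hjj, hje⟩ := strong_exchange cs (κ ++ [i]) ht hlent
        rw [hω, ← hc] at hje
        by_cases hj : jj = κ.length
        · -- c = y * s i
          have herase : (κ ++ [i]).eraseIdx jj = κ := by
            subst hj
            rw [List.eraseIdx_append_of_length_le le_rfl]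
            simp
          rw [herase, ← hκ] at hje
          -- hje : y * s i = c
          exact Or.inl (hje ▸ hxc)
        · have hj' : jj < κ.length := by
            rw [List.length_append, List.length_singleton] at hjj
            omega
          have herase : (κ ++ [i]).eraseIdx jj = κ.eraseIdx jj ++ [i] := by
            rw [List.eraseIdx_append_of_lt_length hj']
          have hcs_eq : c * cs.simple i = cs.wordProd (κ.eraseIdx jj) := by
            rw [← hje, herase, cs.wordProd_append, cs.wordProd_singleton,
              cs.simple_mul_simple_cancel_right]
          have hκlen : κ.length = cs.length (y * cs.simple i) := by
            rw [hκ]; exact hκred.symm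
          have hcs_lt : cs.length (c * cs.simple i) < cs.length (y * cs.simple i) := by
            have h1 := cs.length_wordProd_le (κ.eraseIdx jj)
            have h2 : (κ.eraseIdx jj).length = κ.length - 1 := by
              rw [List.length_eraseIdx]
              simp [hj']
            rw [hcs_eq]
            omega
          have hIH := ((IH (cs.length c) (by omega) c le_rfl i x hxc).1 hcup).1
          have hstep : bstep cs (c * cs.simple i) (y * cs.simple i) :=
            bstep_conj cs i ht hc hcs_lt
          exact Or.inl (hIH.tail hstep)
      · -- c * s i goes down
        have hIH := ((IH (cs.length c) (by omega) c le_rfl i x hxc).2 hcdown)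
        have hstep : bstep cs (c * cs.simple i) (y * cs.simple i) :=
          bstep_conj cs i ht hc (by omega)
        rcases hIH with h1 | h2
        · exact Or.inl (h1.tail hstep)
        · exact Or.inr (h2.tail hstep)


lemma bstep_down_simple (y : W) (i : B)
    (h : cs.length (y * cs.simple i) < cs.length y) :
    bstep cs (y * cs.simple i) y :=
  ⟨cs.simple i, cs.isReflection_simple i, rfl, h⟩

lemma ble_up {x y : W} (i : B) (h : ble cs x y)
    (hl : cs.length y < cs.length (y * cs.simple i)) :
    ble cs x (y * cs.simple i) ∧ ble cs (x * cs.simple i) (y * cs.simple i) := by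
  apply (liftMN cs (cs.length y) y le_rfl i x h).1
  rcases cs.length_mul_simple y i with h1 | h1
  · exact h1
  · omega

lemma ble_down {x y : W} (i : B) (h : ble cs x y)
    (hl : cs.length (y * cs.simple i) < cs.length y) :
    ble cs (x * cs.simple i) y := by
  have hd : cs.length (y * cs.simple i) + 1 = cs.length y := by
    rcases cs.length_mul_simple y i with h1 | h1
    · omega
    · exact h1
  rcases (liftMN cs (cs.length y) y le_rfl i x h).2 hd with h1 | h2
  · have hup : cs.length (y * cs.simple i)
        < cs.length ((y * cs.simple i) * cs.simple i) := by
      rw [cs.simple_mul_simple_cancel_right]; omega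
    have h3 := (ble_up cs i h1 hup).2
    rwa [cs.simple_mul_simple_cancel_right] at h3
  · exact h2.tail (bstep_down_simple cs y i hl)

lemma ble_inv {x y : W} (h : ble cs x y) : ble cs x⁻¹ y⁻¹ := by
  induction h with
  | refl => exact ble_refl cs _
  | tail _ hstep ih =>
    rename_i b c ha
    obtain ⟨t, ht, hc, hl⟩ := hstep
    have hstep' : bstep cs b⁻¹ c⁻¹ := by
      refine ⟨c * t * c⁻¹, ht.conj c, ?_, ?_⟩
      · rw [hc, mul_inv_rev, ht.inv]
        group
      · rw [cs.length_inv, cs.length_inv]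
        exact hl
    exact ih.tail hstep'

lemma length_mul_simple_left_inv (y : W) (i : B) :
    cs.length (y⁻¹ * cs.simple i) = cs.length (cs.simple i * y) := by
  rw [← cs.length_inv (y⁻¹ * cs.simple i), mul_inv_rev, cs.inv_simple, inv_inv]

lemma ble_up_left {x y : W} (i : B) (h : ble cs x y)
    (hl : cs.length y < cs.length (cs.simple i * y)) :
    ble cs x (cs.simple i * y) ∧ ble cs (cs.simple i * x) (cs.simple i * y) := by
  have hl' : cs.length y⁻¹ < cs.length (y⁻¹ * cs.simple i) := by
    rw [length_mul_simple_left_inv, cs.length_inv]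
    exact hl
  have h' := ble_up cs i (ble_inv cs h) hl'
  constructor
  · have h1 := ble_inv cs h'.1
    rwa [mul_inv_rev, cs.inv_simple, inv_inv, inv_inv] at h1
  · have h2 := ble_inv cs h'.2
    rwa [mul_inv_rev, mul_inv_rev, cs.inv_simple, inv_inv, inv_inv] at h2

lemma ble_down_left {x y : W} (i : B) (h : ble cs x y)
    (hl : cs.length (cs.simple i * y) < cs.length y) :
    ble cs (cs.simple i * x) y := by
  have hl' : cs.length (y⁻¹ * cs.simple i) < cs.length y⁻¹ := by
    rw [length_mul_simple_left_inv, cs.length_inv]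
    exact hl
  have h' := ble_down cs i (ble_inv cs h) hl'
  have h1 := ble_inv cs h'
  rwa [mul_inv_rev, cs.inv_simple, inv_inv, inv_inv] at h1

lemma ble_wordProd_sublist {ω μ : List B} (hred : cs.IsReduced ω) (hsub : μ.Sublist ω) :
    ble cs (cs.wordProd μ) (cs.wordProd ω) := by
  induction ω using List.reverseRecOn generalizing μ with
  | nil =>
    rw [List.sublist_nil.mp hsub]
    exact ble_refl cs _
  | append_singleton κ i ih =>
    have hκred : cs.IsReduced κ := by
      have := hred.take κ.length
      rwa [List.take_left] at this
    have hπ : cs.wordProd (κ ++ [i]) = cs.wordProd κ * cs.simple i := by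
      rw [cs.wordProd_append, cs.wordProd_singleton]
    have hup : cs.length (cs.wordProd κ) < cs.length (cs.wordProd κ * cs.simple i) := by
      have h1 := cs.length_wordProd_le κ
      have h2 : cs.length (cs.wordProd (κ ++ [i])) = κ.length + 1 := by
        rw [hred]; simp
      rw [hπ] at h2
      omega
    obtain ⟨ν, ξ, rfl, hν, hξ⟩ := List.sublist_append_iff.mp hsub
    rcases List.sublist_singleton.mp hξ with rfl | rfl
    · rw [List.append_nil, hπ]
      exact (ble_up cs i (ih hκred hν) hup).1
    · rw [cs.wordProd_append, cs.wordProd_singleton, hπ]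
      exact (ble_up cs i (ih hκred hν) hup).2

lemma sublist_of_ble : ∀ n (Ω : List B), Ω.length ≤ n → ∀ u : W, ble cs u (cs.wordProd Ω) →
    ∃ μ, μ.Sublist Ω ∧ cs.wordProd μ = u := by
  intro n
  induction n with
  | zero =>
    intro Ω hΩ u h
    have hΩnil : Ω = [] := List.length_eq_zero_iff.mp (by omega)
    subst hΩnil
    rcases Relation.ReflTransGen.cases_tail h with heq | ⟨c, huc, hcstep⟩
    · exact ⟨[], List.Sublist.refl _, heq⟩
    · obtain ⟨t, ht, hc, hl⟩ := hcstep
      rw [cs.wordProd_nil] at hl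
      simp at hl
  | succ n IH =>
    intro Ω hΩ u h
    rcases Relation.ReflTransGen.cases_tail h with heq | ⟨c, huc, hcstep⟩
    · exact ⟨Ω, List.Sublist.refl _, heq⟩
    · obtain ⟨t, ht, hc, hl⟩ := hcstep
      subst hc
      obtain ⟨j, hj, hje⟩ := strong_exchange cs Ω ht hl
      rw [← hje] at huc
      have hlen : (Ω.eraseIdx j).length ≤ n := by
        rw [List.length_eraseIdx]
        simp [hj]
        omega
      obtain ⟨μ, hsub, hμ⟩ := IH (Ω.eraseIdx j) hlen _ huc
      exact ⟨μ, hsub.trans (List.eraseIdx_sublist Ω j), hμ⟩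

lemma bruhatLE_iff_ble {u v : W} : BruhatLE cs u v ↔ ble cs u v := by
  constructor
  · rintro ⟨ω, hred, rfl, μ, hsub, rfl⟩
    exact ble_wordProd_sublist cs hred hsub
  · intro h
    obtain ⟨ω, hred, hωv⟩ := cs.exists_reduced_word' v
    rw [hωv] at h
    obtain ⟨μ, hsub, hμ⟩ := sublist_of_ble cs ω.length ω le_rfl u h
    exact ⟨ω, hred, hωv.symm, μ, hsub, hμ⟩


/-! ### Demazure-type folds -/

lemma ble_one (w : W) : ble cs 1 w := by
  generalize hn : cs.length w = n
  induction n using Nat.strong_induction_on generalizing w with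
  | _ n IH =>
  by_cases hw : w = 1
  · subst hw; exact ble_refl cs 1
  · obtain ⟨i, hi⟩ := cs.exists_rightDescent_of_ne_one hw
    have hlt : cs.length (w * cs.simple i) < cs.length w := hi
    have h1 : ble cs 1 (w * cs.simple i) := IH (cs.length (w * cs.simple i))
      (by omega) _ rfl
    have h2 := (ble_up cs i h1 (by rw [cs.simple_mul_simple_cancel_right]; omega)).1
    rwa [cs.simple_mul_simple_cancel_right] at h2

noncomputable def rstep (w : W) (i : B) : W :=
  if cs.length (w * cs.simple i) < cs.length w then w else w * cs.simple i

noncomputable def rfold (w : W) (Λ : List B) : W := Λ.foldl (rstep cs) w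

noncomputable def lstep (i : B) (w : W) : W :=
  if cs.length (cs.simple i * w) < cs.length w then w else cs.simple i * w

noncomputable def lfold (Λ : List B) (w : W) : W := Λ.foldr (lstep cs) w

lemma rfold_mem : ∀ (Λ : List B) (w : W), ∃ ν, ν.Sublist Λ ∧ rfold cs w Λ = w * cs.wordProd ν := by
  intro Λ
  induction Λ with
  | nil => exact fun w => ⟨[], List.Sublist.refl _, by simp [rfold]⟩
  | cons a Λ ih =>
    intro w
    show ∃ ν, ν.Sublist (a :: Λ) ∧ rfold cs (rstep cs w a) Λ = w * cs.wordProd ν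
    obtain ⟨ν, hν, heq⟩ := ih (rstep cs w a)
    by_cases h : cs.length (w * cs.simple a) < cs.length w
    · refine ⟨ν, hν.cons a, ?_⟩
      simp only [rstep, if_pos h] at heq ⊢
      exact heq
    · refine ⟨a :: ν, List.Sublist.cons₂ a hν, ?_⟩
      simp only [rstep, if_neg h] at heq ⊢
      rw [heq, cs.wordProd_cons, mul_assoc]

lemma lfold_mem : ∀ (Λ : List B) (w : W), ∃ ν, ν.Sublist Λ ∧ lfold cs Λ w = cs.wordProd ν * w := by
  intro Λ
  induction Λ with
  | nil => exact fun w => ⟨[], List.Sublist.refl _, by simp [lfold]⟩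
  | cons a Λ ih =>
    intro w
    show ∃ ν, ν.Sublist (a :: Λ) ∧ lstep cs a (lfold cs Λ w) = cs.wordProd ν * w
    obtain ⟨ν, hν, heq⟩ := ih w
    by_cases h : cs.length (cs.simple a * lfold cs Λ w) < cs.length (lfold cs Λ w)
    · refine ⟨ν, hν.cons a, ?_⟩
      simp only [lstep, if_pos h]
      exact heq
    · refine ⟨a :: ν, List.Sublist.cons₂ a hν, ?_⟩
      simp only [lstep, if_neg h]
      rw [heq, cs.wordProd_cons, mul_assoc]

lemma rfold_max : ∀ (Λ : List B) (w x : W) (ν : List B), ble cs x w → ν.Sublist Λ →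
    ble cs (x * cs.wordProd ν) (rfold cs w Λ) := by
  intro Λ
  induction Λ with
  | nil =>
    intro w x ν hx hν
    rw [List.sublist_nil.mp hν]
    simpa [rfold] using hx
  | cons a Λ ih =>
    intro w x ν hx hν
    show ble cs (x * cs.wordProd ν) (rfold cs (rstep cs w a) Λ)
    have hxstep : ble cs x (rstep cs w a) := by
      simp only [rstep]
      by_cases h : cs.length (w * cs.simple a) < cs.length w
      · rwa [if_pos h]
      · rw [if_neg h]
        have hup : cs.length w < cs.length (w * cs.simple a) := by
          rcases cs.length_mul_simple w a with h1 | h1 <;> omega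
        exact (ble_up cs a hx hup).1
    have hxstep2 : ble cs (x * cs.simple a) (rstep cs w a) := by
      simp only [rstep]
      by_cases h : cs.length (w * cs.simple a) < cs.length w
      · rw [if_pos h]
        exact ble_down cs a hx h
      · rw [if_neg h]
        have hup : cs.length w < cs.length (w * cs.simple a) := by
          rcases cs.length_mul_simple w a with h1 | h1 <;> omega
        exact (ble_up cs a hx hup).2
    rcases List.sublist_cons_iff.mp hν with h1 | ⟨ν', rfl, hν'⟩
    · exact ih (rstep cs w a) x ν hxstep h1
    · have := ih (rstep cs w a) (x * cs.simple a) ν' hxstep2 hν'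
      rwa [cs.wordProd_cons, ← mul_assoc]

lemma lfold_max : ∀ (Λ : List B) (w x : W) (ν : List B), ble cs x w → ν.Sublist Λ →
    ble cs (cs.wordProd ν * x) (lfold cs Λ w) := by
  intro Λ
  induction Λ with
  | nil =>
    intro w x ν hx hν
    rw [List.sublist_nil.mp hν]
    simpa [lfold] using hx
  | cons a Λ ih =>
    intro w x ν hx hν
    show ble cs (cs.wordProd ν * x) (lstep cs a (lfold cs Λ w))
    rcases List.sublist_cons_iff.mp hν with h1 | ⟨ν', rfl, hν'⟩
    · have hz := ih w x ν hx h1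
      simp only [lstep]
      by_cases h : cs.length (cs.simple a * lfold cs Λ w) < cs.length (lfold cs Λ w)
      · rwa [if_pos h]
      · rw [if_neg h]
        have hup : cs.length (lfold cs Λ w) < cs.length (cs.simple a * lfold cs Λ w) := by
          rcases cs.length_simple_mul (lfold cs Λ w) a with h1 | h1 <;> omega
        exact (ble_up_left cs a hz hup).1
    · have hz := ih w x ν' hx hν'
      rw [cs.wordProd_cons, mul_assoc]
      simp only [lstep]
      by_cases h : cs.length (cs.simple a * lfold cs Λ w) < cs.length (lfold cs Λ w)
      · rw [if_pos h]
        exact ble_down_left cs a hz h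
      · rw [if_neg h]
        have hup : cs.length (lfold cs Λ w) < cs.length (cs.simple a * lfold cs Λ w) := by
          rcases cs.length_simple_mul (lfold cs Λ w) a with h1 | h1 <;> omega
        exact (ble_up_left cs a hz hup).2

theorem exists_demazure_max (σ₁ σ₂ v : W) :
    ∃ m : W, (∃ a b : W, ble cs a σ₁ ∧ ble cs b σ₂ ∧ m = a * v * b) ∧
      (∀ x a k b : W, ble cs a σ₁ → ble cs k v → ble cs b σ₂ → x = a * k * b →
        ble cs x m) := by
  obtain ⟨ω₁, h1red, h1⟩ := cs.exists_reduced_word' σ₁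
  obtain ⟨ω₂, h2red, h2⟩ := cs.exists_reduced_word' σ₂
  refine ⟨lfold cs ω₁ (rfold cs v ω₂), ?_, ?_⟩
  · obtain ⟨ν₂, hν₂, hr⟩ := rfold_mem cs ω₂ v
    obtain ⟨ν₁, hν₁, hm⟩ := lfold_mem cs ω₁ (rfold cs v ω₂)
    refine ⟨cs.wordProd ν₁, cs.wordProd ν₂, ?_, ?_, ?_⟩
    · rw [h1]; exact ble_wordProd_sublist cs h1red hν₁
    · rw [h2]; exact ble_wordProd_sublist cs h2red hν₂
    · rw [hm, hr, mul_assoc]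
  · intro x a k b ha hk hb hx
    rw [h1] at ha
    rw [h2] at hb
    obtain ⟨μ₁, hμ₁, hμ₁e⟩ := sublist_of_ble cs ω₁.length ω₁ le_rfl a ha
    obtain ⟨μ₂, hμ₂, hμ₂e⟩ := sublist_of_ble cs ω₂.length ω₂ le_rfl b hb
    have step1 : ble cs (k * b) (rfold cs v ω₂) := by
      rw [← hμ₂e]
      exact rfold_max cs ω₂ v k μ₂ hk hμ₂
    have step2 := lfold_max cs ω₁ (rfold cs v ω₂) (k * b) μ₁ step1 hμ₁
    rw [hμ₁e] at step2
    rwa [hx, mul_assoc]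

/-! ### Finite standard parabolic subgroups -/

lemma mem_parabolic_iff (X : Set B) (w : W) :
    w ∈ Subgroup.closure (cs.simple '' X) ↔
      ∃ Λ : List B, (∀ b ∈ Λ, b ∈ X) ∧ cs.wordProd Λ = w := by
  constructor
  · intro hw
    induction hw using Subgroup.closure_induction with
    | mem x hx =>
      obtain ⟨i, hi, rfl⟩ := hx
      exact ⟨[i], by simpa using hi, cs.wordProd_singleton i⟩
    | one => exact ⟨[], by simp, cs.wordProd_nil⟩
    | mul x y hx hy ihx ihy =>
      obtain ⟨Λ₁, hΛ₁, rfl⟩ := ihx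
      obtain ⟨Λ₂, hΛ₂, rfl⟩ := ihy
      exact ⟨Λ₁ ++ Λ₂, List.forall_mem_append.mpr ⟨hΛ₁, hΛ₂⟩, cs.wordProd_append Λ₁ Λ₂⟩
    | inv x hx ihx =>
      obtain ⟨Λ, hΛ, rfl⟩ := ihx
      exact ⟨Λ.reverse, fun b hb => hΛ b (List.mem_reverse.mp hb), cs.wordProd_reverse Λ⟩
  · rintro ⟨Λ, hΛ, rfl⟩
    induction Λ with
    | nil => simpa using Subgroup.one_mem _
    | cons a Λ ih =>
      rw [cs.wordProd_cons]
      exact Subgroup.mul_mem _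
        (Subgroup.subset_closure ⟨a, hΛ a (by simp), rfl⟩)
        (ih (fun b hb => hΛ b (by simp [hb])))

lemma exists_parabolic_top (X : Set B)
    (hfin : ((Subgroup.closure (cs.simple '' X) : Subgroup W) : Set W).Finite) :
    ∃ p : W, p ∈ Subgroup.closure (cs.simple '' X) ∧
      (∀ q ∈ Subgroup.closure (cs.simple '' X), ble cs q p) ∧
      (∀ x : W, ble cs x p → x ∈ Subgroup.closure (cs.simple '' X)) := by
  set P := Subgroup.closure (cs.simple '' X) with hP
  obtain ⟨N, hN⟩ : ∃ N, ∀ q ∈ P, cs.length q ≤ N := by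
    obtain ⟨N, hN⟩ := (hfin.image cs.length).bddAbove
    exact ⟨N, fun q hq => hN ⟨q, hq, rfl⟩⟩
  have climb : ∀ k (p : W), p ∈ P → N - cs.length p ≤ k →
      ∃ p', p' ∈ P ∧ ∀ i ∈ X, cs.length (p' * cs.simple i) < cs.length p' := by
    intro k
    induction k with
    | zero =>
      intro p hp hk
      by_cases h : ∀ i ∈ X, cs.length (p * cs.simple i) < cs.length p
      · exact ⟨p, hp, h⟩
      · exfalso
        push_neg at h
        obtain ⟨i, hi, hge⟩ := h
        have hne := cs.length_mul_simple_ne p i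
        have hmem : p * cs.simple i ∈ P :=
          Subgroup.mul_mem _ hp (Subgroup.subset_closure ⟨i, hi, rfl⟩)
        have := hN _ hmem
        have := hN _ hp
        omega
    | succ k IH =>
      intro p hp hk
      by_cases h : ∀ i ∈ X, cs.length (p * cs.simple i) < cs.length p
      · exact ⟨p, hp, h⟩
      · push_neg at h
        obtain ⟨i, hi, hge⟩ := h
        have hne := cs.length_mul_simple_ne p i
        have hmem : p * cs.simple i ∈ P :=
          Subgroup.mul_mem _ hp (Subgroup.subset_closure ⟨i, hi, rfl⟩)
        have hb := hN _ hmem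
        exact IH (p * cs.simple i) hmem (by omega)
  obtain ⟨p, hp, hdesc⟩ := climb N 1 (Subgroup.one_mem _) (by simp)
  refine ⟨p, hp, ?_, ?_⟩
  · intro q hq
    obtain ⟨Λ, hΛ, rfl⟩ := (mem_parabolic_iff cs X q).mp hq
    clear hq
    induction Λ using List.reverseRecOn with
    | nil =>
      rw [cs.wordProd_nil]
      exact ble_one cs p
    | append_singleton κ i ih =>
      rw [cs.wordProd_append, cs.wordProd_singleton]
      have hκ : ∀ b ∈ κ, b ∈ X := fun b hb => hΛ b (by simp [hb])
      have hiX : i ∈ X := hΛ i (by simp)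
      exact ble_down cs i (ih hκ) (hdesc i hiX)
  · intro x hx
    obtain ⟨Λ, hΛ, hΛp⟩ := (mem_parabolic_iff cs X p).mp hp
    rw [← hΛp] at hx
    obtain ⟨μ, hμ, hμx⟩ := sublist_of_ble cs Λ.length Λ le_rfl x hx
    exact (mem_parabolic_iff cs X x).mpr
      ⟨μ, fun b hb => hΛ b (hμ.mem hb), hμx⟩

end BruhatAux


open BruhatAux in
/-- If `K ⊆ W` has a unique Bruhat-maximal element `v`, then for any `σ₁, σ₂ ∈ W` the
set `I(σ₁) K I(σ₂)` has a unique maximal element, namely the unique maximal element of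
`I(σ₁) v I(σ₂)`.  In particular, for any two finite standard parabolic subgroups
`W₁, W₂`, the set `W₁ K W₂` has a unique maximal element, namely the unique maximal
element of `W₁ v W₂`. -/
theorem stmt_5 (cs : CoxeterSystem M W) (K : Set W) (v : W) (hK : IsBrMax cs K v) :
    (∀ σ₁ σ₂ : W,
      ∃ m : W,
        IsBrMax cs
          {x | ∃ a, BruhatLE cs a σ₁ ∧ ∃ k ∈ K, ∃ b, BruhatLE cs b σ₂ ∧ x = a * k * b} m ∧
        IsBrMax cs
          {x | ∃ a, BruhatLE cs a σ₁ ∧ ∃ b, BruhatLE cs b σ₂ ∧ x = a * v * b} m) ∧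
    (∀ W₁ W₂ : Subgroup W, IsStdParabolic cs W₁ → IsStdParabolic cs W₂ →
      (W₁ : Set W).Finite → (W₂ : Set W).Finite →
      ∃ m : W,
        IsBrMax cs {x | ∃ a ∈ W₁, ∃ k ∈ K, ∃ b ∈ W₂, x = a * k * b} m ∧
        IsBrMax cs (dblCoset W₁ W₂ v) m) := by
  have hKv : ∀ k ∈ K, ble cs k v := fun k hk => (bruhatLE_iff_ble cs).mp (hK.2 k hk)
  constructor
  · intro σ₁ σ₂
    obtain ⟨m, ⟨a₀, b₀, ha₀, hb₀, hm⟩, hmax⟩ := exists_demazure_max cs σ₁ σ₂ v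
    refine ⟨m, ⟨⟨a₀, (bruhatLE_iff_ble cs).mpr ha₀, v, hK.1, b₀,
        (bruhatLE_iff_ble cs).mpr hb₀, hm⟩, ?_⟩,
      ⟨a₀, (bruhatLE_iff_ble cs).mpr ha₀, b₀, (bruhatLE_iff_ble cs).mpr hb₀, hm⟩, ?_⟩
    · rintro x ⟨a, ha, k, hk, b, hb, rfl⟩
      exact (bruhatLE_iff_ble cs).mpr (hmax _ a k b ((bruhatLE_iff_ble cs).mp ha)
        (hKv k hk) ((bruhatLE_iff_ble cs).mp hb) rfl)
    · rintro x ⟨a, ha, b, hb, rfl⟩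
      exact (bruhatLE_iff_ble cs).mpr (hmax _ a v b ((bruhatLE_iff_ble cs).mp ha)
        (ble_refl cs v) ((bruhatLE_iff_ble cs).mp hb) rfl)
  · intro W₁ W₂ hstd₁ hstd₂ hfin₁ hfin₂
    obtain ⟨X₁, rfl⟩ := hstd₁
    obtain ⟨X₂, rfl⟩ := hstd₂
    obtain ⟨p₁, hp₁mem, hp₁max, hp₁inv⟩ := exists_parabolic_top cs X₁ hfin₁
    obtain ⟨p₂, hp₂mem, hp₂max, hp₂inv⟩ := exists_parabolic_top cs X₂ hfin₂
    obtain ⟨m, ⟨a₀, b₀, ha₀, hb₀, hm⟩, hmax⟩ := exists_demazure_max cs p₁ p₂ v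
    refine ⟨m, ⟨⟨a₀, hp₁inv a₀ ha₀, v, hK.1, b₀, hp₂inv b₀ hb₀, hm⟩, ?_⟩,
      ⟨a₀, hp₁inv a₀ ha₀, b₀, hp₂inv b₀ hb₀, hm⟩, ?_⟩
    · rintro x ⟨a, ha, k, hk, b, hb, rfl⟩
      exact (bruhatLE_iff_ble cs).mpr
        (hmax _ a k b (hp₁max a ha) (hKv k hk) (hp₂max b hb) rfl)
    · rintro x ⟨a, ha, b, hb, rfl⟩
      exact (bruhatLE_iff_ble cs).mpr
        (hmax _ a v b (hp₁max a ha) (ble_refl cs v) (hp₂max b hb) rfl)
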